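/- Let a < b, let f : ℝ → ℝ be twice continuously differentiable, let x₀ satisfy the initial-data conditions, let ε > 0, and let x be a classical solution of the ε-regularized problem such that in addition x_t is continuous on [a,b]×[0,∞) and has continuous partial derivatives ∂_u x_t, ∂_uu x_t and ∂_t x_t on (a,b)×(0,∞). Then the function t ↦ sup_{u∈[a,b]} |x_t(u,t)| is nonincreasing on [0,∞); in particular, for every t > 0 one has sup_{u∈[a,b]} |x_uu(u,t) − f(u)|/(x_u(u,t)² + ε) = sup_{u∈[a,b]} |x_t(u,t)| ≤ sup_{u∈[a,b]} |x₀''(u) − f(u)|/x₀'(u)². -/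

import Mathlib

open Set MeasureTheory



section AuxLemmas
open Filter Topology MeasureTheory intervalIntegral

lemma myEqOnIcc {a b : ℝ} (hab : a < b) {f g : ℝ → ℝ}
    (hf : ContinuousOn f (Icc a b)) (hg : ContinuousOn g (Icc a b))
    (h : ∀ u ∈ Ioo a b, f u = g u) : ∀ u ∈ Icc a b, f u = g u := by
  intro u hu
  have hcl : u ∈ closure (Ioo a b) := by rw [closure_Ioo hab.ne]; exact hu
  have hne : (𝓝[Ioo a b] u).NeBot := mem_closure_iff_nhdsWithin_neBot.mp hcl
  have hf' : Tendsto f (𝓝[Ioo a b] u) (𝓝 (f u)) :=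
    (hf u hu).mono_left (nhdsWithin_mono _ Ioo_subset_Icc_self)
  have hg' : Tendsto g (𝓝[Ioo a b] u) (𝓝 (g u)) :=
    (hg u hu).mono_left (nhdsWithin_mono _ Ioo_subset_Icc_self)
  have heq : f =ᶠ[𝓝[Ioo a b] u] g :=
    eventually_mem_nhdsWithin.mono (fun v hv => h v hv)
  exact tendsto_nhds_unique (hf'.congr' heq) hg'

lemma mySecondDeriv {s : Set ℝ} (hs : IsOpen s) {g g' : ℝ → ℝ} {u c : ℝ} (hu : u ∈ s)
    (hg : ∀ v ∈ s, HasDerivAt g (g' v) v) (hg' : HasDerivAt g' c u)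
    (hmax : IsLocalMax g u) : c ≤ 0 := by
  by_contra hc
  push_neg at hc
  have hgu : g' u = 0 := by
    have h1 := hmax.deriv_eq_zero
    rwa [(hg u hu).deriv] at h1
  have hslope : Tendsto (slope g' u) (𝓝[≠] u) (𝓝 c) :=
    hasDerivAt_iff_tendsto_slope.mp hg'
  have hev : ∀ᶠ v in 𝓝[>] u, 0 < slope g' u v :=
    (hslope.mono_left (nhdsWithin_mono _ (fun v hv => ne_of_gt hv))).eventually
      (eventually_gt_nhds hc)
  have hev2 : ∀ᶠ v in 𝓝[>] u, 0 < g' v := by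
    filter_upwards [hev, self_mem_nhdsWithin] with v hv hv'
    rw [slope_def_field, hgu, sub_zero] at hv
    have := mul_pos hv (sub_pos.mpr (hv' : u < v))
    rwa [div_mul_cancel₀ _ (sub_ne_zero.mpr (ne_of_gt hv'))] at this
  have hev3 : ∀ᶠ v in 𝓝[>] u, v ∈ s :=
    eventually_nhdsWithin_of_eventually_nhds (eventually_of_mem (hs.mem_nhds hu) (fun v hv => hv))
  have hev4 : ∀ᶠ v in 𝓝[>] u, g v ≤ g u :=
    eventually_nhdsWithin_of_eventually_nhds hmax
  obtain ⟨u', hu', hsub⟩ := mem_nhdsGT_iff_exists_Ioo_subset.mp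
    (hev2.and (hev3.and hev4))
  set m := (u + u') / 2 with hm
  have hum : u < m := by simp only [hm]; linarith [hu'.out]
  have hmu' : m < u' := by simp only [hm]; linarith [hu'.out]
  have hIccs : Icc u m ⊆ s := by
    intro v hv
    rcases eq_or_lt_of_le hv.1 with h | h
    · exact h ▸ hu
    · exact (hsub ⟨h, lt_of_le_of_lt hv.2 hmu'⟩).2.1
  have hmono : StrictMonoOn g (Icc u m) := by
    apply strictMonoOn_of_deriv_pos (convex_Icc u m)
    · exact fun v hv => ((hg v (hIccs hv)).differentiableAt.continuousAt).continuousWithinAt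
    · intro v hv
      rw [interior_Icc] at hv
      rw [(hg v (hIccs ⟨hv.1.le, hv.2.le⟩)).deriv]
      exact (hsub ⟨hv.1, hv.2.trans hmu'⟩).1
  have h1 : g u < g m := hmono ⟨le_refl u, hum.le⟩ ⟨hum.le, le_refl m⟩ hum
  have h2 : g m ≤ g u := (hsub ⟨hum, hmu'⟩).2.2
  linarith

lemma myLeftDeriv {F : ℝ → ℝ} {s t τ d : ℝ} (hst : s < τ) (hτ : τ ≤ t)
    (hmax : ∀ y ∈ Icc s t, F y ≤ F τ) (hd : HasDerivAt F d τ) : 0 ≤ d := by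
  have hslope : Tendsto (slope F τ) (𝓝[<] τ) (𝓝 d) :=
    (hasDerivAt_iff_tendsto_slope.mp hd).mono_left
      (nhdsWithin_mono _ (fun y hy => ne_of_lt hy))
  refine ge_of_tendsto hslope ?_
  filter_upwards [Ioo_mem_nhdsLT_of_mem ⟨hst, le_refl τ⟩] with y hy
  rw [slope_def_field]
  exact div_nonneg_of_nonpos
    (sub_nonpos.mpr (hmax y ⟨hy.1.le, hy.2.le.trans hτ⟩)) (sub_nonpos.mpr hy.2.le)

lemma myMaxPrinciple {a b s t : ℝ} (hab : a < b) (hst : s < t)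
    {W Wu Wuu Wt A B : ℝ → ℝ → ℝ} {K : ℝ}
    (hWc : ContinuousOn (fun p : ℝ × ℝ => W p.1 p.2) (Icc a b ×ˢ Icc s t))
    (hWu : ∀ τ ∈ Ioc s t, ∀ u ∈ Ioo a b, HasDerivAt (fun v => W v τ) (Wu u τ) u)
    (hWuu : ∀ τ ∈ Ioc s t, ∀ u ∈ Ioo a b, HasDerivAt (fun v => Wu v τ) (Wuu u τ) u)
    (hWt : ∀ u ∈ Ioo a b, ∀ τ ∈ Ioc s t, HasDerivAt (fun σ => W u σ) (Wt u τ) τ)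
    (heq : ∀ u ∈ Ioo a b, ∀ τ ∈ Ioc s t, Wt u τ = A u τ * Wuu u τ + B u τ * Wu u τ)
    (hA : ∀ u ∈ Ioo a b, ∀ τ ∈ Ioc s t, 0 < A u τ)
    (hbdry : ∀ u ∈ Icc a b, W u s ≤ K)
    (hlat : ∀ τ ∈ Icc s t, W a τ ≤ K ∧ W b τ ≤ K) :
    ∀ u ∈ Icc a b, ∀ τ ∈ Icc s t, W u τ ≤ K := by
  have key : ∀ δ : ℝ, 0 < δ → ∀ u ∈ Icc a b, ∀ τ ∈ Icc s t, W u τ - δ * (τ - s) ≤ K := by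
    intro δ hδ
    set V : ℝ × ℝ → ℝ := fun p => W p.1 p.2 - δ * (p.2 - s) with hV
    have hVc : ContinuousOn V (Icc a b ×ˢ Icc s t) :=
      hWc.sub (Continuous.continuousOn (by continuity))
    have hcpt : IsCompact (Icc a b ×ˢ Icc s t) := isCompact_Icc.prod isCompact_Icc
    have hne : (Icc a b ×ˢ Icc s t).Nonempty :=
      ⟨(a, s), ⟨⟨le_refl a, hab.le⟩, ⟨le_refl s, hst.le⟩⟩⟩
    obtain ⟨p₀, hp₀, hmax⟩ := hcpt.exists_isMaxOn hne hVc
    suffices hVK : V p₀ ≤ K by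
      intro u hu τ hτ
      have h1 : V (u, τ) ≤ V p₀ := hmax (show (u,τ) ∈ Icc a b ×ˢ Icc s t from ⟨hu, hτ⟩)
      exact le_trans h1 hVK
    by_contra hKV
    push_neg at hKV
    obtain ⟨u₀, τ₀⟩ := p₀
    have hu₀I : u₀ ∈ Icc a b := hp₀.1
    have hτ₀I : τ₀ ∈ Icc s t := hp₀.2
    -- not on parabolic boundary
    have hτ₀s : s < τ₀ := by
      rcases eq_or_lt_of_le hτ₀I.1 with h | h
      · exfalso
        have : V (u₀, τ₀) = W u₀ s := by simp [hV, ← h]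
        rw [this] at hKV
        exact absurd (hbdry u₀ hu₀I) (not_le.mpr hKV)
      · exact h
    have hδτ : 0 ≤ δ * (τ₀ - s) := mul_nonneg hδ.le (by linarith)
    have hu₀a : a < u₀ := by
      rcases eq_or_lt_of_le hu₀I.1 with h | h
      · exfalso
        have : V (u₀, τ₀) ≤ W a τ₀ := by simp [hV, ← h]; linarith
        exact absurd ((hlat τ₀ hτ₀I).1) (not_le.mpr (by linarith))
      · exact h
    have hu₀b : u₀ < b := by
      rcases lt_or_eq_of_le hu₀I.2 with h | h
      · exact h
      · exfalso
        have : V (u₀, τ₀) ≤ W b τ₀ := by simp [hV, h]; linarith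
        exact absurd ((hlat τ₀ hτ₀I).2) (not_le.mpr (by linarith))
    have hu₀ : u₀ ∈ Ioo a b := ⟨hu₀a, hu₀b⟩
    have hτ₀ : τ₀ ∈ Ioc s t := ⟨hτ₀s, hτ₀I.2⟩
    -- spatial local max
    have hlocmax : IsLocalMax (fun v => W v τ₀) u₀ := by
      have hmem : Ioo a b ∈ 𝓝 u₀ := isOpen_Ioo.mem_nhds hu₀
      filter_upwards [hmem] with v hv
      have h2 : W v τ₀ - δ * (τ₀ - s) ≤ W u₀ τ₀ - δ * (τ₀ - s) :=
        hmax (show (v, τ₀) ∈ Icc a b ×ˢ Icc s t from ⟨Ioo_subset_Icc_self hv, hτ₀I⟩)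
      linarith
    have hWu0 : Wu u₀ τ₀ = 0 := by
      have h1 := hlocmax.deriv_eq_zero
      rwa [(hWu τ₀ hτ₀ u₀ hu₀).deriv] at h1
    have hWuu0 : Wuu u₀ τ₀ ≤ 0 :=
      mySecondDeriv isOpen_Ioo hu₀ (fun v hv => hWu τ₀ hτ₀ v hv) (hWuu τ₀ hτ₀ u₀ hu₀) hlocmax
    -- temporal
    have hFd : HasDerivAt (fun σ => W u₀ σ - δ * (σ - s)) (Wt u₀ τ₀ - δ) τ₀ := by
      have h2 : HasDerivAt (fun σ : ℝ => δ * (σ - s)) δ τ₀ := by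
        simpa using ((hasDerivAt_id τ₀).sub_const s).const_mul δ
      exact (hWt u₀ hu₀ τ₀ hτ₀).sub h2
    have hFmax : ∀ y ∈ Icc s t, W u₀ y - δ * (y - s) ≤ W u₀ τ₀ - δ * (τ₀ - s) := by
      intro y hy
      have h2 : W u₀ y - δ * (y - s) ≤ W u₀ τ₀ - δ * (τ₀ - s) :=
        hmax (show (u₀, y) ∈ Icc a b ×ˢ Icc s t from ⟨hu₀I, hy⟩)
      exact h2
    have hWt0 : 0 ≤ Wt u₀ τ₀ - δ := myLeftDeriv hτ₀s hτ₀I.2 hFmax hFd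
    have heqp := heq u₀ hu₀ τ₀ hτ₀
    have hAp := hA u₀ hu₀ τ₀ hτ₀
    rw [hWu0, mul_zero, add_zero] at heqp
    have hfin : A u₀ τ₀ * Wuu u₀ τ₀ ≤ 0 := mul_nonpos_of_nonneg_of_nonpos hAp.le hWuu0
    linarith
  intro u hu τ hτ
  refine le_of_forall_pos_le_add ?_
  intro ε hε
  have hδ : 0 < ε / (t - s) := div_pos hε (by linarith)
  have h1 := key (ε / (t - s)) hδ u hu τ hτ
  have h2 : ε / (t - s) * (τ - s) ≤ ε := by
    rw [div_mul_eq_mul_div, div_le_iff₀ (by linarith : (0:ℝ) < t - s)]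
    nlinarith [hτ.1, hτ.2]
  linarith

lemma myUnderIntegral {F F' : ℝ → ℝ → ℝ} {s₀ tt u₁ r C : ℝ} (hr : 0 < r) (hst : s₀ ≤ tt)
    (hFc : ∀ u, |u - u₁| ≤ r → ContinuousOn (F u) (Icc s₀ tt))
    (hF'c : ContinuousOn (F' u₁) (Icc s₀ tt))
    (hbound : ∀ u, |u - u₁| ≤ r → ∀ τ ∈ Icc s₀ tt, |F' u τ| ≤ C)
    (hdiff : ∀ τ ∈ Icc s₀ tt, ∀ u, |u - u₁| ≤ r → HasDerivAt (fun v => F v τ) (F' u τ) u) :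
    HasDerivAt (fun u => ∫ τ in s₀..tt, F u τ) (∫ τ in s₀..tt, F' u₁ τ) u₁ := by
  have hball : ∀ u ∈ Metric.ball u₁ r, |u - u₁| ≤ r := by
    intro u hu
    rw [Metric.mem_ball, Real.dist_eq] at hu
    exact hu.le
  have hu₁ : |u₁ - u₁| ≤ r := by simp [hr.le]
  have hmemI : ∀ τ ∈ uIoc s₀ tt, τ ∈ Icc s₀ tt := by
    rw [uIoc_of_le hst]; exact fun τ hτ => Ioc_subset_Icc_self hτ
  refine (intervalIntegral.hasDerivAt_integral_of_dominated_loc_of_deriv_le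
    (bound := fun _ => C) (Metric.ball_mem_nhds u₁ hr) ?_ ?_ ?_ ?_ ?_ ?_).2
  · filter_upwards [Metric.ball_mem_nhds u₁ hr] with u hu
    rw [uIoc_of_le hst]
    exact ((hFc u (hball u hu)).mono Ioc_subset_Icc_self).aestronglyMeasurable measurableSet_Ioc
  · exact ((hFc u₁ hu₁).mono (by rw [uIcc_of_le hst])).intervalIntegrable
  · rw [uIoc_of_le hst]
    exact (hF'c.mono Ioc_subset_Icc_self).aestronglyMeasurable measurableSet_Ioc
  · apply ae_of_all
    intro τ hτ u hu
    rw [Real.norm_eq_abs]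
    exact hbound u (hball u hu) τ (hmemI τ hτ)
  · exact intervalIntegrable_const
  · apply ae_of_all
    intro τ hτ u hu
    exact hdiff τ (hmemI τ hτ) u (hball u hu)

lemma myInterchange {a b ε : ℝ} (hε : 0 < ε) {f : ℝ → ℝ}
    {x xu xuu xt xtu xtuu xtt : ℝ → ℝ → ℝ}
    (hxtc : ContinuousOn (fun p : ℝ × ℝ => xt p.1 p.2) (Icc a b ×ˢ Ici 0))
    (hdu : ∀ t : ℝ, 0 ≤ t → ∀ u ∈ Icc a b, HasDerivWithinAt (fun v => x v t) (xu u t) (Icc a b) u)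
    (hduu : ∀ t : ℝ, 0 ≤ t → ∀ u ∈ Icc a b, HasDerivWithinAt (fun v => xu v t) (xuu u t) (Icc a b) u)
    (hdt : ∀ u ∈ Icc a b, ∀ t : ℝ, 0 ≤ t → HasDerivWithinAt (fun s => x u s) (xt u t) (Ici 0) t)
    (hpde : ∀ u ∈ Ioo a b, ∀ t : ℝ, 0 < t → xt u t = (xuu u t - f u) / ((xu u t) ^ 2 + ε))
    (hxtu : ∀ t : ℝ, 0 < t → ∀ u ∈ Ioo a b, HasDerivAt (fun v => xt v t) (xtu u t) u)
    (hxtuu : ∀ t : ℝ, 0 < t → ∀ u ∈ Ioo a b, HasDerivAt (fun v => xtu v t) (xtuu u t) u)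
    (hxtt : ∀ u ∈ Ioo a b, ∀ t : ℝ, 0 < t → HasDerivAt (fun s => xt u s) (xtt u t) t)
    (hcxtu : ContinuousOn (fun p : ℝ × ℝ => xtu p.1 p.2) (Ioo a b ×ˢ Ioi 0))
    (hcxtuu : ContinuousOn (fun p : ℝ × ℝ => xtuu p.1 p.2) (Ioo a b ×ˢ Ioi 0))
    {u₀ t₀ : ℝ} (hu₀ : u₀ ∈ Ioo a b) (ht₀ : 0 < t₀) :
    xtt u₀ t₀ = (xtuu u₀ t₀ - 2 * xu u₀ t₀ * xt u₀ t₀ * xtu u₀ t₀) / ((xu u₀ t₀) ^ 2 + ε) := by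
  obtain ⟨hau₀, hu₀b⟩ := hu₀
  set η := min (min ((u₀ - a) / 2) ((b - u₀) / 2)) (t₀ / 2) with hηdef
  have hη : 0 < η := by
    apply lt_min (lt_min (by linarith) (by linarith)) (by linarith)
  have hη1 : η ≤ (u₀ - a) / 2 := le_trans (min_le_left _ _) (min_le_left _ _)
  have hη2 : η ≤ (b - u₀) / 2 := le_trans (min_le_left _ _) (min_le_right _ _)
  have hη3 : η ≤ t₀ / 2 := min_le_right _ _
  set s₀ := t₀ - η with hs₀def
  set t₁ := t₀ + η with ht₁def
  have hs₀pos : 0 < s₀ := by simp only [hs₀def]; linarith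
  have hs₀t₁ : s₀ ≤ t₁ := by simp only [hs₀def, ht₁def]; linarith
  have hIu : ∀ u : ℝ, |u - u₀| ≤ η → u ∈ Ioo a b := by
    intro u hu
    have := abs_le.mp hu
    exact ⟨by linarith [this.1], by linarith [this.2]⟩
  have hIt : Icc s₀ t₁ ⊆ Ioi (0:ℝ) := fun τ hτ => lt_of_lt_of_le hs₀pos hτ.1
  -- bounds on xtu, xtuu over the compact rectangle
  have hKsub : Icc (u₀ - η) (u₀ + η) ×ˢ Icc s₀ t₁ ⊆ Ioo a b ×ˢ Ioi 0 := by
    intro p hp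
    exact ⟨hIu p.1 (abs_le.mpr ⟨by linarith [hp.1.1], by linarith [hp.1.2]⟩), hIt hp.2⟩
  obtain ⟨C, hC⟩ := (isCompact_Icc.prod isCompact_Icc).exists_bound_of_continuousOn
    (hcxtu.mono hKsub)
  obtain ⟨C', hC'⟩ := (isCompact_Icc.prod isCompact_Icc).exists_bound_of_continuousOn
    (hcxtuu.mono hKsub)
  -- continuity helpers
  have hcxt1 : ∀ u ∈ Icc a b, ContinuousOn (fun τ => xt u τ) (Icc s₀ t₁) := by
    intro u hu
    exact ContinuousOn.comp (g := fun p : ℝ × ℝ => xt p.1 p.2) hxtc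
      ((continuous_const.prodMk continuous_id).continuousOn)
      (fun τ hτ => ⟨hu, Set.mem_Ici.mpr (le_of_lt (hIt hτ))⟩)
  have hcxtu1 : ∀ u ∈ Ioo a b, ContinuousOn (fun τ => xtu u τ) (Icc s₀ t₁) := by
    intro u hu
    exact ContinuousOn.comp (g := fun p : ℝ × ℝ => xtu p.1 p.2) hcxtu
      ((continuous_const.prodMk continuous_id).continuousOn)
      (fun τ hτ => ⟨hu, hIt hτ⟩)
  have hcxtuu1 : ∀ u ∈ Ioo a b, ContinuousOn (fun τ => xtuu u τ) (Icc s₀ t₁) := by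
    intro u hu
    exact ContinuousOn.comp (g := fun p : ℝ × ℝ => xtuu p.1 p.2) hcxtuu
      ((continuous_const.prodMk continuous_id).continuousOn)
      (fun τ hτ => ⟨hu, hIt hτ⟩)
  -- claim 1
  have claim1 : ∀ u₁ : ℝ, |u₁ - u₀| ≤ η / 2 → ∀ t ∈ Icc s₀ t₁,
      xu u₁ t = xu u₁ s₀ + ∫ τ in s₀..t, xtu u₁ τ := by
    intro u₁ hu₁ t ht
    have hu₁I : u₁ ∈ Ioo a b := hIu u₁ (by linarith [abs_nonneg (u₁ - u₀)])
    have hftc : ∀ u ∈ Icc a b, x u t = x u s₀ + ∫ τ in s₀..t, xt u τ := by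
      intro u hu
      have h1 : ∀ τ ∈ uIcc s₀ t, HasDerivAt (fun s => x u s) (xt u τ) τ := by
        intro τ hτ
        rw [uIcc_of_le ht.1] at hτ
        have hτpos : 0 < τ := lt_of_lt_of_le hs₀pos hτ.1
        exact (hdt u hu τ hτpos.le).hasDerivAt (Ici_mem_nhds hτpos)
      have h2 : IntervalIntegrable (fun τ => xt u τ) volume s₀ t := by
        apply ContinuousOn.intervalIntegrable
        apply (hcxt1 u hu).mono
        rw [uIcc_of_le ht.1]
        exact Icc_subset_Icc le_rfl ht.2
      have h3 := intervalIntegral.integral_eq_sub_of_hasDerivAt h1 h2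
      rw [h3]; ring
    have hd1 : HasDerivAt (fun u => ∫ τ in s₀..t, xt u τ) (∫ τ in s₀..t, xtu u₁ τ) u₁ := by
      apply myUnderIntegral (r := η / 4) (by linarith) ht.1
      · intro u hu
        have huI : |u - u₀| ≤ η := by
          calc |u - u₀| ≤ |u - u₁| + |u₁ - u₀| := abs_sub_le u u₁ u₀
          _ ≤ η := by linarith
        exact (hcxt1 u (Ioo_subset_Icc_self (hIu u huI))).mono (Icc_subset_Icc le_rfl ht.2)
      · exact (hcxtu1 u₁ hu₁I).mono (Icc_subset_Icc le_rfl ht.2)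
      · intro u hu τ hτ
        have huI : |u - u₀| ≤ η := by
          calc |u - u₀| ≤ |u - u₁| + |u₁ - u₀| := abs_sub_le u u₁ u₀
          _ ≤ η := by linarith
        have hmem : (u, τ) ∈ Icc (u₀ - η) (u₀ + η) ×ˢ Icc s₀ t₁ :=
          ⟨⟨by linarith [(abs_le.mp huI).1], by linarith [(abs_le.mp huI).2]⟩,
            ⟨hτ.1, hτ.2.trans ht.2⟩⟩
        have h5 := hC (u, τ) hmem
        rwa [Real.norm_eq_abs] at h5
      · intro τ hτ u hu
        have huI : |u - u₀| ≤ η := by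
          calc |u - u₀| ≤ |u - u₁| + |u₁ - u₀| := abs_sub_le u u₁ u₀
          _ ≤ η := by linarith
        exact hxtu τ (lt_of_lt_of_le hs₀pos hτ.1) u (hIu u huI)
    have htpos : (0:ℝ) ≤ t := le_of_lt (lt_of_lt_of_le hs₀pos ht.1)
    have hL : HasDerivAt (fun u => x u t) (xu u₁ t) u₁ :=
      (hdu t htpos u₁ (Ioo_subset_Icc_self hu₁I)).hasDerivAt
        (Icc_mem_nhds hu₁I.1 hu₁I.2)
    have hR : HasDerivAt (fun u => x u s₀ + ∫ τ in s₀..t, xt u τ)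
        (xu u₁ s₀ + ∫ τ in s₀..t, xtu u₁ τ) u₁ :=
      HasDerivAt.add ((hdu s₀ hs₀pos.le u₁ (Ioo_subset_Icc_self hu₁I)).hasDerivAt
        (Icc_mem_nhds hu₁I.1 hu₁I.2)) hd1
    have hEq : (fun u => x u t) =ᶠ[𝓝 u₁] (fun u => x u s₀ + ∫ τ in s₀..t, xt u τ) :=
      eventually_of_mem (Icc_mem_nhds hu₁I.1 hu₁I.2) hftc
    exact hL.unique (hR.congr_of_eventuallyEq hEq)
  have hu₀I : u₀ ∈ Ioo a b := ⟨hau₀, hu₀b⟩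
  have hu₀Icc : u₀ ∈ Icc a b := Ioo_subset_Icc_self hu₀I
  -- claim 2
  have claim2 : ∀ t ∈ Icc s₀ t₁, xuu u₀ t = xuu u₀ s₀ + ∫ τ in s₀..t, xtuu u₀ τ := by
    intro t ht
    have htpos : (0:ℝ) ≤ t := le_of_lt (lt_of_lt_of_le hs₀pos ht.1)
    have hd1 : HasDerivAt (fun u => ∫ τ in s₀..t, xtu u τ) (∫ τ in s₀..t, xtuu u₀ τ) u₀ := by
      apply myUnderIntegral (r := η / 4) (by linarith) ht.1
      · intro u hu
        have huI : |u - u₀| ≤ η := by linarith [abs_nonneg (u - u₀)]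
        exact (hcxtu1 u (hIu u huI)).mono (Icc_subset_Icc le_rfl ht.2)
      · exact (hcxtuu1 u₀ hu₀I).mono (Icc_subset_Icc le_rfl ht.2)
      · intro u hu τ hτ
        have huI : |u - u₀| ≤ η := by linarith [abs_nonneg (u - u₀)]
        have hmem : (u, τ) ∈ Icc (u₀ - η) (u₀ + η) ×ˢ Icc s₀ t₁ :=
          ⟨⟨by linarith [(abs_le.mp huI).1], by linarith [(abs_le.mp huI).2]⟩,
            ⟨hτ.1, hτ.2.trans ht.2⟩⟩
        have h5 := hC' (u, τ) hmem
        rwa [Real.norm_eq_abs] at h5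
      · intro τ hτ u hu
        have huI : |u - u₀| ≤ η := by linarith [abs_nonneg (u - u₀)]
        exact hxtuu τ (lt_of_lt_of_le hs₀pos hτ.1) u (hIu u huI)
    have hL : HasDerivAt (fun u => xu u t) (xuu u₀ t) u₀ :=
      (hduu t htpos u₀ hu₀Icc).hasDerivAt (Icc_mem_nhds hau₀ hu₀b)
    have hR : HasDerivAt (fun u => xu u s₀ + ∫ τ in s₀..t, xtu u τ)
        (xuu u₀ s₀ + ∫ τ in s₀..t, xtuu u₀ τ) u₀ :=
      HasDerivAt.add ((hduu s₀ hs₀pos.le u₀ hu₀Icc).hasDerivAt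
        (Icc_mem_nhds hau₀ hu₀b)) hd1
    have hEq : (fun u => xu u t) =ᶠ[𝓝 u₀] (fun u => xu u s₀ + ∫ τ in s₀..t, xtu u τ)
        := by
      filter_upwards [Metric.ball_mem_nhds u₀ (half_pos hη)] with u hu
      have : |u - u₀| ≤ η / 2 := by
        rw [Metric.mem_ball, Real.dist_eq] at hu
        exact hu.le
      exact claim1 u this t ht
    exact hL.unique (hR.congr_of_eventuallyEq hEq)
  -- claim 3 : time derivative of xu at (u₀,t₀) is xtu
  have hIccnhds : Icc s₀ t₁ ∈ 𝓝 t₀ := Icc_mem_nhds (by simp only [hs₀def]; linarith)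
    (by simp only [ht₁def]; linarith)
  have hct₀ : ∀ {g : ℝ → ℝ → ℝ}, ContinuousOn (fun p : ℝ × ℝ => g p.1 p.2)
      (Ioo a b ×ˢ Ioi 0) → ContinuousAt (fun τ => g u₀ τ) t₀ := by
    intro g hg
    have h1 : ContinuousAt (fun p : ℝ × ℝ => g p.1 p.2) (u₀, t₀) :=
      hg.continuousAt ((isOpen_Ioo.prod isOpen_Ioi).mem_nhds ⟨hu₀I, ht₀⟩)
    exact ContinuousAt.comp (g := fun p : ℝ × ℝ => g p.1 p.2) h1
      ((continuous_const.prodMk continuous_id).continuousAt)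
  have claim3 : HasDerivAt (fun t => xu u₀ t) (xtu u₀ t₀) t₀ := by
    have hint : IntervalIntegrable (fun τ => xtu u₀ τ) volume s₀ t₀ := by
      apply ContinuousOn.intervalIntegrable
      apply (hcxtu1 u₀ hu₀I).mono
      rw [uIcc_of_le (by simp only [hs₀def]; linarith)]
      exact Icc_subset_Icc le_rfl (by simp only [ht₁def]; linarith)
    have hmeasAt : StronglyMeasurableAtFilter (fun τ => xtu u₀ τ) (𝓝 t₀) :=
      ⟨Icc s₀ t₁, hIccnhds, ((hcxtu1 u₀ hu₀I).aestronglyMeasurable measurableSet_Icc)⟩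
    have h1 := intervalIntegral.integral_hasDerivAt_right hint hmeasAt (hct₀ hcxtu)
    have h2 := h1.const_add (xu u₀ s₀)
    have hEq : (fun t => xu u₀ t) =ᶠ[𝓝 t₀]
        (fun t => xu u₀ s₀ + ∫ τ in s₀..t, xtu u₀ τ) :=
      eventually_of_mem hIccnhds (fun t ht => claim1 u₀ (by simp [hη.le, half_pos hη |>.le]) t ht)
    exact h2.congr_of_eventuallyEq hEq
  have claim4 : HasDerivAt (fun t => xuu u₀ t) (xtuu u₀ t₀) t₀ := by
    have hint : IntervalIntegrable (fun τ => xtuu u₀ τ) volume s₀ t₀ := by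
      apply ContinuousOn.intervalIntegrable
      apply (hcxtuu1 u₀ hu₀I).mono
      rw [uIcc_of_le (by simp only [hs₀def]; linarith)]
      exact Icc_subset_Icc le_rfl (by simp only [ht₁def]; linarith)
    have hmeasAt : StronglyMeasurableAtFilter (fun τ => xtuu u₀ τ) (𝓝 t₀) :=
      ⟨Icc s₀ t₁, hIccnhds, ((hcxtuu1 u₀ hu₀I).aestronglyMeasurable measurableSet_Icc)⟩
    have h1 := intervalIntegral.integral_hasDerivAt_right hint hmeasAt (hct₀ hcxtuu)
    have h2 := h1.const_add (xuu u₀ s₀)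
    have hEq : (fun t => xuu u₀ t) =ᶠ[𝓝 t₀]
        (fun t => xuu u₀ s₀ + ∫ τ in s₀..t, xtuu u₀ τ) :=
      eventually_of_mem hIccnhds (fun t ht => claim2 t ht)
    exact h2.congr_of_eventuallyEq hEq
  -- final computation
  have hD : (0:ℝ) < (xu u₀ t₀) ^ 2 + ε := by positivity
  have hden : HasDerivAt (fun t => (xu u₀ t) ^ 2 + ε)
      (2 * xu u₀ t₀ * xtu u₀ t₀) t₀ := by
    have h1 := (claim3.pow 2).add_const ε
    simpa using h1
  have hnum : HasDerivAt (fun t => xuu u₀ t - f u₀) (xtuu u₀ t₀) t₀ := claim4.sub_const _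
  have hq := hnum.div hden (ne_of_gt hD)
  have hEq2 : (fun t => xt u₀ t) =ᶠ[𝓝 t₀]
      (fun t => (xuu u₀ t - f u₀) / ((xu u₀ t) ^ 2 + ε)) :=
    eventually_of_mem (Ioi_mem_nhds ht₀) (fun t ht => hpde u₀ hu₀I t ht)
  have huniq := (hxtt u₀ hu₀I t₀ ht₀).unique (hq.congr_of_eventuallyEq hEq2)
  rw [huniq, hpde u₀ hu₀I t₀ ht₀]
  field_simp

end AuxLemmas

open Filter Topology intervalIntegral

/-- Initial-data conditions (\(\ref{cond:x0}\)) with explicit first and second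
derivative witnesses `x₀'`, `x₀''` and Hölder exponent `β`. -/
def InitDataW (a b : ℝ) (x₀ x₀' x₀'' : ℝ → ℝ) (β : ℝ) : Prop :=
  β ∈ Set.Ioo (0:ℝ) 1 ∧
  (∀ u ∈ Set.Icc a b, HasDerivWithinAt x₀ (x₀' u) (Set.Icc a b) u) ∧
  (∀ u ∈ Set.Icc a b, HasDerivWithinAt x₀' (x₀'' u) (Set.Icc a b) u) ∧
  ContinuousOn x₀'' (Set.Icc a b) ∧
  (∃ C : ℝ, ∀ u ∈ Set.Icc a b, ∀ v ∈ Set.Icc a b, |x₀'' u - x₀'' v| ≤ C * |u - v| ^ β) ∧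
  x₀ a = -1 ∧ x₀ b = 1 ∧ x₀'' a = a ∧ x₀'' b = b ∧
  (∀ u ∈ Set.Icc a b, 0 < x₀' u)

/-- A classical solution of the `ε`-regularized problem \eqref{xepseq}:
`x` is continuous on `[a,b] × [0,∞)` together with its partial derivatives
`x_u`, `x_uu` (within `[a,b]` in space) and `x_t` (within `[0,∞)` in time),
satisfies `x_t = (x_uu - f(u))/(x_u² + ε)` on `(a,b) × (0,∞)`, the boundary
conditions `x(a,t) = -1`, `x(b,t) = 1`, and `x(·,0) = x₀`. -/
def IsClassicalSolEps (a b ε : ℝ) (f x₀ : ℝ → ℝ) (x xu xuu xt : ℝ → ℝ → ℝ) : Prop :=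
  ContinuousOn (fun p : ℝ × ℝ => x p.1 p.2) (Set.Icc a b ×ˢ Set.Ici 0) ∧
  ContinuousOn (fun p : ℝ × ℝ => xu p.1 p.2) (Set.Icc a b ×ˢ Set.Ici 0) ∧
  ContinuousOn (fun p : ℝ × ℝ => xuu p.1 p.2) (Set.Icc a b ×ˢ Set.Ici 0) ∧
  ContinuousOn (fun p : ℝ × ℝ => xt p.1 p.2) (Set.Icc a b ×ˢ Set.Ici 0) ∧
  (∀ t : ℝ, 0 ≤ t → ∀ u ∈ Set.Icc a b,
      HasDerivWithinAt (fun v => x v t) (xu u t) (Set.Icc a b) u) ∧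
  (∀ t : ℝ, 0 ≤ t → ∀ u ∈ Set.Icc a b,
      HasDerivWithinAt (fun v => xu v t) (xuu u t) (Set.Icc a b) u) ∧
  (∀ u ∈ Set.Icc a b, ∀ t : ℝ, 0 ≤ t →
      HasDerivWithinAt (fun s => x u s) (xt u t) (Set.Ici 0) t) ∧
  (∀ u ∈ Set.Ioo a b, ∀ t : ℝ, 0 < t →
      xt u t = (xuu u t - f u) / ((xu u t) ^ 2 + ε)) ∧
  (∀ t : ℝ, 0 ≤ t → x a t = -1 ∧ x b t = 1) ∧
  (∀ u ∈ Set.Icc a b, x u 0 = x₀ u)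

/-- Lemma 2.2: for a classical solution of the regularized problem whose time
derivative `x_t` is itself smooth enough (with partial derivatives `∂_u x_t`,
`∂_uu x_t`, `∂_t x_t` continuous in `(a,b) × (0,∞)`), the map
`t ↦ sup_{u ∈ [a,b]} |x_t(u,t)|` is nonincreasing on `[0,∞)`; in particular,
for every `t > 0`,
`sup |x_uu(·,t) - f|/(x_u(·,t)² + ε) = sup |x_t(·,t)| ≤ sup |x₀'' - f|/x₀'²`. -/
theorem lem_bound_xet (a b : ℝ) (hab : a < b) (f : ℝ → ℝ) (hf : ContDiff ℝ 2 f)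
    (x₀ x₀' x₀'' : ℝ → ℝ) (β : ℝ) (h₀ : InitDataW a b x₀ x₀' x₀'' β)
    (ε : ℝ) (hε : 0 < ε) (x xu xuu xt : ℝ → ℝ → ℝ)
    (hsol : IsClassicalSolEps a b ε f x₀ x xu xuu xt)
    (xtu xtuu xtt : ℝ → ℝ → ℝ)
    (hxtu : ∀ t : ℝ, 0 < t → ∀ u ∈ Set.Ioo a b,
      HasDerivAt (fun v => xt v t) (xtu u t) u)
    (hxtuu : ∀ t : ℝ, 0 < t → ∀ u ∈ Set.Ioo a b,
      HasDerivAt (fun v => xtu v t) (xtuu u t) u)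
    (hxtt : ∀ u ∈ Set.Ioo a b, ∀ t : ℝ, 0 < t →
      HasDerivAt (fun s => xt u s) (xtt u t) t)
    (hcxtu : ContinuousOn (fun p : ℝ × ℝ => xtu p.1 p.2) (Set.Ioo a b ×ˢ Set.Ioi 0))
    (hcxtuu : ContinuousOn (fun p : ℝ × ℝ => xtuu p.1 p.2) (Set.Ioo a b ×ˢ Set.Ioi 0))
    (hcxtt : ContinuousOn (fun p : ℝ × ℝ => xtt p.1 p.2) (Set.Ioo a b ×ˢ Set.Ioi 0)) :
    AntitoneOn (fun t => sSup ((fun u => |xt u t|) '' Set.Icc a b)) (Set.Ici 0) ∧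
    ∀ t : ℝ, 0 < t →
      sSup ((fun u => |xuu u t - f u| / ((xu u t) ^ 2 + ε)) '' Set.Icc a b)
        = sSup ((fun u => |xt u t|) '' Set.Icc a b) ∧
      sSup ((fun u => |xt u t|) '' Set.Icc a b)
        ≤ sSup ((fun u => |x₀'' u - f u| / (x₀' u) ^ 2) '' Set.Icc a b) := by
  obtain ⟨hxc, hxuc, hxuuc, hxtc, hdu, hduu, hdt, hpde, hbc, hic⟩ := hsol
  obtain ⟨hβ, hx₀d, hx₀dd, hx₀ddc, hHold, hx₀a, hx₀b, hx₀dda, hx₀ddb, hx₀dpos⟩ := h₀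
  have haI : a ∈ Icc a b := ⟨le_rfl, hab.le⟩
  have hbI : b ∈ Icc a b := ⟨hab.le, le_rfl⟩
  have hIccne : (Icc a b).Nonempty := nonempty_Icc.mpr hab.le
  -- slice continuity
  have hslice : ∀ {g : ℝ → ℝ → ℝ}, ContinuousOn (fun p : ℝ × ℝ => g p.1 p.2)
      (Icc a b ×ˢ Ici 0) → ∀ t : ℝ, 0 ≤ t → ContinuousOn (fun u => g u t) (Icc a b) := by
    intro g hg t ht
    exact ContinuousOn.comp (g := fun p : ℝ × ℝ => g p.1 p.2) hg
      ((continuous_id.prodMk continuous_const).continuousOn)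
      (fun u hu => ⟨hu, ht⟩)
  -- zero boundary values of xt
  have hxt0bd : ∀ t : ℝ, 0 ≤ t → xt a t = 0 ∧ xt b t = 0 := by
    intro t ht
    constructor
    · have h1 : HasDerivWithinAt (fun s => x a s) (xt a t) (Ici 0) t := hdt a haI t ht
      have h2 : HasDerivWithinAt (fun s => x a s) 0 (Ici 0) t :=
        (hasDerivWithinAt_const t (Ici (0:ℝ)) (-1 : ℝ)).congr
          (fun s hs => (hbc s hs).1) ((hbc t ht).1)
      have hud : UniqueDiffWithinAt ℝ (Ici (0:ℝ)) t := uniqueDiffOn_Ici 0 t ht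
      rw [← h1.derivWithin hud]; exact h2.derivWithin hud
    · have h1 : HasDerivWithinAt (fun s => x b s) (xt b t) (Ici 0) t := hdt b hbI t ht
      have h2 : HasDerivWithinAt (fun s => x b s) 0 (Ici 0) t :=
        (hasDerivWithinAt_const t (Ici (0:ℝ)) (1 : ℝ)).congr
          (fun s hs => (hbc s hs).2) ((hbc t ht).2)
      have hud : UniqueDiffWithinAt ℝ (Ici (0:ℝ)) t := uniqueDiffOn_Ici 0 t ht
      rw [← h1.derivWithin hud]; exact h2.derivWithin hud
  -- sup facts
  have hMbdd : ∀ t : ℝ, 0 ≤ t → BddAbove ((fun u => |xt u t|) '' Icc a b) :=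
    fun t ht => isCompact_Icc.bddAbove_image ((hslice hxtc t ht).abs)
  have hMne : ∀ t : ℝ, ((fun u => |xt u t|) '' Icc a b).Nonempty :=
    fun t => hIccne.image _
  have hMle : ∀ t : ℝ, 0 ≤ t → ∀ u ∈ Icc a b,
      |xt u t| ≤ sSup ((fun u => |xt u t|) '' Icc a b) :=
    fun t ht u hu => le_csSup (hMbdd t ht) ⟨u, hu, rfl⟩
  have hMpos : ∀ t : ℝ, 0 ≤ t → 0 ≤ sSup ((fun u => |xt u t|) '' Icc a b) :=
    fun t ht => le_trans (abs_nonneg _) (hMle t ht a haI)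
  -- the interchange/PDE for xt
  have hcore : ∀ u ∈ Ioo a b, ∀ τ : ℝ, 0 < τ →
      xtt u τ = (1 / ((xu u τ) ^ 2 + ε)) * xtuu u τ +
        (-(2 * xu u τ * xt u τ) / ((xu u τ) ^ 2 + ε)) * xtu u τ := by
    intro u hu τ hτ
    have h1 := myInterchange hε hxtc hdu hduu hdt hpde
      (fun t ht u hu => hxtu t ht u hu) (fun t ht u hu => hxtuu t ht u hu)
      (fun u hu t ht => hxtt u hu t ht) hcxtu hcxtuu hu hτ
    have hD : (0:ℝ) < (xu u τ) ^ 2 + ε := by positivity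
    rw [h1]
    field_simp
    ring
  -- Antitone part
  have hmono : AntitoneOn (fun t => sSup ((fun u => |xt u t|) '' Icc a b)) (Ici 0) := by
    intro s hs t ht hst
    simp only
    rcases eq_or_lt_of_le hst with rfl | hlt
    · exact le_rfl
    have hs0 : (0:ℝ) ≤ s := hs
    set K := sSup ((fun u => |xt u s|) '' Icc a b) with hK
    have hIccsub : Icc s t ⊆ Ici (0:ℝ) := fun τ hτ => le_trans hs0 hτ.1
    have hIocpos : ∀ τ ∈ Ioc s t, (0:ℝ) < τ := fun τ hτ => lt_of_le_of_lt hs0 hτ.1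
    have hprodsub : Icc a b ×ˢ Icc s t ⊆ Icc a b ×ˢ Ici 0 :=
      prod_mono subset_rfl hIccsub
    have key1 : ∀ u ∈ Icc a b, ∀ τ ∈ Icc s t, xt u τ ≤ K := by
      apply myMaxPrinciple hab hlt (Wu := xtu) (Wuu := xtuu) (Wt := xtt)
        (A := fun u τ => 1 / ((xu u τ) ^ 2 + ε))
        (B := fun u τ => -(2 * xu u τ * xt u τ) / ((xu u τ) ^ 2 + ε))
        (hxtc.mono hprodsub)
        (fun τ hτ u hu => hxtu τ (hIocpos τ hτ) u hu)
        (fun τ hτ u hu => hxtuu τ (hIocpos τ hτ) u hu)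
        (fun u hu τ hτ => hxtt u hu τ (hIocpos τ hτ))
        (fun u hu τ hτ => hcore u hu τ (hIocpos τ hτ))
        (fun u hu τ hτ => by positivity)
        (fun u hu => le_trans (le_abs_self _) (hMle s hs0 u hu))
        (fun τ hτ => ⟨by rw [(hxt0bd τ (hIccsub hτ)).1]; exact hMpos s hs0,
          by rw [(hxt0bd τ (hIccsub hτ)).2]; exact hMpos s hs0⟩)
    have key2 : ∀ u ∈ Icc a b, ∀ τ ∈ Icc s t, -(xt u τ) ≤ K := by
      apply myMaxPrinciple hab hlt (Wu := fun u τ => -(xtu u τ)) (Wuu := fun u τ => -(xtuu u τ))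
        (Wt := fun u τ => -(xtt u τ))
        (A := fun u τ => 1 / ((xu u τ) ^ 2 + ε))
        (B := fun u τ => -(2 * xu u τ * xt u τ) / ((xu u τ) ^ 2 + ε))
        ((hxtc.mono hprodsub).neg)
        (fun τ hτ u hu => (hxtu τ (hIocpos τ hτ) u hu).neg)
        (fun τ hτ u hu => (hxtuu τ (hIocpos τ hτ) u hu).neg)
        (fun u hu τ hτ => (hxtt u hu τ (hIocpos τ hτ)).neg)
        (fun u hu τ hτ => by
          have h := hcore u hu τ (hIocpos τ hτ)
          beta_reduce
          rw [h]; ring)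
        (fun u hu τ hτ => by positivity)
        (fun u hu => le_trans (neg_le_abs _) (hMle s hs0 u hu))
        (fun τ hτ => ⟨by show -(xt a τ) ≤ _; rw [(hxt0bd τ (hIccsub hτ)).1]; simpa using hMpos s hs0,
          by show -(xt b τ) ≤ _; rw [(hxt0bd τ (hIccsub hτ)).2]; simpa using hMpos s hs0⟩)
    apply csSup_le (hMne t)
    rintro y ⟨u, hu, rfl⟩
    have htmem : t ∈ Icc s t := ⟨hlt.le, le_rfl⟩
    exact abs_le.mpr ⟨neg_le.mp (key2 u hu t htmem), key1 u hu t htmem⟩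
  refine ⟨hmono, ?_⟩
  intro t ht
  constructor
  · -- equality of sups
    have hEq : ∀ u ∈ Icc a b, |xuu u t - f u| / ((xu u t) ^ 2 + ε) = |xt u t| := by
      apply myEqOnIcc hab
      · apply ContinuousOn.div
        · exact ((hslice hxuuc t ht.le).sub hf.continuous.continuousOn).abs
        · exact ((hslice hxuc t ht.le).pow 2).add continuousOn_const
        · intro u hu; positivity
      · exact (hslice hxtc t ht.le).abs
      · intro u hu
        rw [hpde u hu t ht, abs_div, abs_of_pos (by positivity :
          (0:ℝ) < (xu u t) ^ 2 + ε)]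
    rw [Set.image_congr hEq]
  · -- the bound via t = 0
    have h0 : ∀ u ∈ Icc a b, xu u 0 = x₀' u := by
      intro u hu
      have hud : UniqueDiffWithinAt ℝ (Icc a b) u := uniqueDiffOn_Icc hab u hu
      have h1 : HasDerivWithinAt x₀ (xu u 0) (Icc a b) u :=
        (hdu 0 le_rfl u hu).congr (fun v hv => (hic v hv).symm) ((hic u hu).symm)
      rw [← h1.derivWithin hud, ← (hx₀d u hu).derivWithin hud]
    have h00 : ∀ u ∈ Icc a b, xuu u 0 = x₀'' u := by
      intro u hu
      have hud : UniqueDiffWithinAt ℝ (Icc a b) u := uniqueDiffOn_Icc hab u hu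
      have h1 : HasDerivWithinAt x₀' (xuu u 0) (Icc a b) u :=
        (hduu 0 le_rfl u hu).congr (fun v hv => (h0 v hv).symm) ((h0 u hu).symm)
      rw [← h1.derivWithin hud, ← (hx₀dd u hu).derivWithin hud]
    have hxt00 : ∀ u ∈ Icc a b, xt u 0 = (x₀'' u - f u) / ((x₀' u) ^ 2 + ε) := by
      apply myEqOnIcc hab
      · exact hslice hxtc 0 le_rfl
      · apply ContinuousOn.div
        · exact hx₀ddc.sub hf.continuous.continuousOn
        · exact (ContinuousOn.pow (fun u hu => (hx₀dd u hu).continuousWithinAt) 2).add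
            continuousOn_const
        · intro u hu
          have := hx₀dpos u hu; positivity
      · intro u hu
        have huIcc : u ∈ Icc a b := Ioo_subset_Icc_self hu
        have hpath : Tendsto (fun s : ℝ => ((u : ℝ), s)) (𝓝[>] (0:ℝ))
            (𝓝[Icc a b ×ˢ Ici 0] ((u : ℝ), (0:ℝ))) := by
          apply tendsto_nhdsWithin_of_tendsto_nhds_of_eventually_within
          · exact ((continuous_const.prodMk continuous_id).tendsto 0).mono_left
              nhdsWithin_le_nhds
          · filter_upwards [self_mem_nhdsWithin] with s hs
            exact ⟨huIcc, Set.mem_Ici.mpr (le_of_lt hs)⟩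
        have hL : Tendsto (fun s => xt u s) (𝓝[>] (0:ℝ)) (𝓝 (xt u 0)) :=
          (hxtc (u, 0) ⟨huIcc, Set.self_mem_Ici⟩).tendsto.comp hpath
        have hXu : Tendsto (fun s => xu u s) (𝓝[>] (0:ℝ)) (𝓝 (xu u 0)) :=
          (hxuc (u, 0) ⟨huIcc, Set.self_mem_Ici⟩).tendsto.comp hpath
        have hXuu : Tendsto (fun s => xuu u s) (𝓝[>] (0:ℝ)) (𝓝 (xuu u 0)) :=
          (hxuuc (u, 0) ⟨huIcc, Set.self_mem_Ici⟩).tendsto.comp hpath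
        have hDne : (xu u 0) ^ 2 + ε ≠ 0 := by positivity
        have hR : Tendsto (fun s => (xuu u s - f u) / ((xu u s) ^ 2 + ε)) (𝓝[>] (0:ℝ))
            (𝓝 ((xuu u 0 - f u) / ((xu u 0) ^ 2 + ε))) :=
          (hXuu.sub tendsto_const_nhds).div ((hXu.pow 2).add tendsto_const_nhds) hDne
        have hEq' : (fun s => xt u s) =ᶠ[𝓝[>] (0:ℝ)]
            (fun s => (xuu u s - f u) / ((xu u s) ^ 2 + ε)) := by
          filter_upwards [self_mem_nhdsWithin] with s hs
          exact hpde u hu s hs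
        have hlim := tendsto_nhds_unique (hL.congr' hEq') hR
        rw [hlim, h0 u huIcc, h00 u huIcc]
    -- final chain
    have hstep1 : sSup ((fun u => |xt u t|) '' Icc a b)
        ≤ sSup ((fun u => |xt u 0|) '' Icc a b) :=
      hmono Set.self_mem_Ici (le_of_lt ht) ht.le
    have hRcont : ContinuousOn (fun u => |x₀'' u - f u| / (x₀' u) ^ 2) (Icc a b) := by
      apply ContinuousOn.div
      · exact (hx₀ddc.sub hf.continuous.continuousOn).abs
      · exact ContinuousOn.pow (fun u hu => (hx₀dd u hu).continuousWithinAt) 2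
      · intro u hu
        have := hx₀dpos u hu; positivity
    have hRbdd : BddAbove ((fun u => |x₀'' u - f u| / (x₀' u) ^ 2) '' Icc a b) :=
      isCompact_Icc.bddAbove_image hRcont
    have hstep2 : sSup ((fun u => |xt u 0|) '' Icc a b)
        ≤ sSup ((fun u => |x₀'' u - f u| / (x₀' u) ^ 2) '' Icc a b) := by
      apply csSup_le (hMne 0)
      rintro y ⟨u, hu, rfl⟩
      have hd := hx₀dpos u hu
      have h1 : |xt u 0| = |x₀'' u - f u| / ((x₀' u) ^ 2 + ε) := by
        rw [hxt00 u hu, abs_div, abs_of_pos (by positivity : (0:ℝ) < (x₀' u) ^ 2 + ε)]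
      have h2 : |x₀'' u - f u| / ((x₀' u) ^ 2 + ε) ≤ |x₀'' u - f u| / (x₀' u) ^ 2 := by
        apply div_le_div_of_nonneg_left (abs_nonneg _) (by positivity) (by linarith)
      exact le_trans (le_of_eq h1) (le_trans h2 (le_csSup hRbdd ⟨u, hu, rfl⟩))
    exact le_trans hstep1 hstep2
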